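/- Let M ≥ 2 be an integer, d ∈ ℤ, k₀ ∈ ℤ. Let h, g : ℤ → ℝ be absolutely summable sequences with Fourier transforms H(ω) = ∑_{k∈ℤ} h[k] e^{-ikω} and G(ω) = ∑_{k∈ℤ} g[k] e^{-ikω}. Let θ₀ : ℝ → ℝ satisfy: for every ω ∈ ℝ there exists n ∈ ℤ with 2θ₀(ω) = (2d+1)(M−1)ω + 2πn, and suppose G(ω) = e^{-iθ₀(ω)} H(ω) for every ω ∈ ℝ. If h[2k₀ − k] = h[k] for every k ∈ ℤ, then g[2k₀ + (2d+1)(M−1) − k] = g[k] for every k ∈ ℤ. -/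

import Mathlib

open Real MeasureTheory


noncomputable def Ce (x : ℝ) : ℂ := Complex.exp ((x : ℂ) * Complex.I)

lemma Ce_add (x y : ℝ) : Ce (x + y) = Ce x * Ce y := by
  simp [Ce, ← Complex.exp_add]; ring_nf

lemma Ce_zero : Ce 0 = 1 := by simp [Ce]

lemma Ce_norm (x : ℝ) : ‖Ce x‖ = 1 := by
  simp [Ce, Complex.norm_exp]

lemma Ce_conj (x : ℝ) : (starRingEnd ℂ) (Ce x) = Ce (-x) := by
  rw [Ce, ← Complex.exp_conj]
  simp [Ce]
  

lemma Ce_mul_Ce_neg (x : ℝ) : Ce x * Ce (-x) = 1 := by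
  rw [← Ce_add]; simp [Ce_zero]

lemma Ce_int_two_pi (n : ℤ) : Ce (2 * π * n) = 1 := by
  have := Complex.exp_int_mul_two_pi_mul_I n
  rw [Ce, ← this]
  push_cast
  ring_nf

lemma integral_Ce_int (n : ℤ) (hn : n ≠ 0) :
    ∫ ω in (0:ℝ)..(2*π), Ce (n * ω) = 0 := by
  have hc : (n:ℂ) * Complex.I ≠ 0 := by
    simp [Complex.I_ne_zero, Complex.ext_iff]
    exact_mod_cast hn
  have h := integral_exp_mul_complex (a := 0) (b := 2*π) hc
  have h2 : ∀ ω : ℝ, Complex.exp ((n:ℂ) * Complex.I * ω) = Ce (n * ω) := by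
    intro ω; rw [Ce]; push_cast; ring_nf
  simp only [h2] at h
  rw [h]
  rw [show (n:ℝ)*(2*π) = 2*π*n by ring, Ce_int_two_pi,
    show (n:ℝ) * 0 = 0 by ring, Ce_zero, sub_self, zero_div]

lemma coeffs_zero (a : ℤ → ℝ) (hs : Summable fun k => |a k|)
    (hz : ∀ ω : ℝ, ∑' k : ℤ, (a k : ℂ) * Ce (-((k:ℝ) * ω)) = 0) :
    ∀ m : ℤ, a m = 0 := by
  intro m
  set f : ℤ → ℝ → ℂ := fun k ω => (a k : ℂ) * Ce (((m - k : ℤ) : ℝ) * ω) with hf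
  have key : ∀ ω : ℝ, ∑' k, f k ω = 0 := by
    intro ω
    have h1 : ∀ k : ℤ, f k ω = Ce ((m:ℝ) * ω) * ((a k : ℂ) * Ce (-((k:ℝ) * ω))) := by
      intro k
      have : ((m - k : ℤ) : ℝ) * ω = (m:ℝ) * ω + (-((k:ℝ) * ω)) := by push_cast; ring
      rw [hf]; simp only [this, Ce_add]; ring
    calc ∑' k, f k ω = ∑' k, Ce ((m:ℝ) * ω) * ((a k : ℂ) * Ce (-((k:ℝ) * ω))) := by
            simp only [h1]
      _ = Ce ((m:ℝ) * ω) * ∑' k, (a k : ℂ) * Ce (-((k:ℝ) * ω)) := tsum_mul_left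
      _ = 0 := by rw [hz ω]; ring
  have hmeas : ∀ k : ℤ, AEStronglyMeasurable (f k) (volume.restrict (Set.Ioc 0 (2*π))) := by
    intro k
    apply Continuous.aestronglyMeasurable
    rw [hf]
    unfold Ce
    fun_prop
  have hnorm : ∀ k ω, (‖f k ω‖₊ : ENNReal) = (‖a k‖₊ : ENNReal) := by
    intro k ω
    have : ‖f k ω‖ = ‖a k‖ := by
      rw [hf]; simp only [norm_mul, Ce_norm, mul_one, Complex.norm_real]
    have h2 : ‖f k ω‖₊ = ‖a k‖₊ := NNReal.eq (by rw [coe_nnnorm, coe_nnnorm]; exact this)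
    exact_mod_cast h2
  have hfin : ∑' k : ℤ, ∫⁻ ω in Set.Ioc 0 (2*π), ‖f k ω‖₊ ∂volume ≠ ⊤ := by
    have heq : ∀ k : ℤ, ∫⁻ ω in Set.Ioc 0 (2*π), ‖f k ω‖₊ ∂volume
        = (‖a k‖₊ : ENNReal) * ENNReal.ofReal (2*π) := by
      intro k
      simp only [hnorm]
      rw [MeasureTheory.setLIntegral_const]
      simp [Real.volume_Ioc, sub_zero]
    simp only [heq]
    rw [ENNReal.tsum_mul_right]
    apply ENNReal.mul_ne_top _ ENNReal.ofReal_ne_top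
    rw [ENNReal.tsum_coe_ne_top_iff_summable]
    have : (fun k : ℤ => ‖a k‖₊) = fun k => ⟨|a k|, abs_nonneg _⟩ := by
      funext k; ext; simp [Real.norm_eq_abs]; rfl
    rw [← NNReal.summable_coe]
    simpa using hs
  have hswap := MeasureTheory.integral_tsum hmeas hfin
  have hints : ∀ k : ℤ, k ≠ m → ∫ ω in Set.Ioc 0 (2*π), f k ω = 0 := by
    intro k hk
    have h0 : (0:ℝ) ≤ 2*π := by positivity
    rw [← intervalIntegral.integral_of_le h0]
    have hmk : (m - k : ℤ) ≠ 0 := sub_ne_zero.mpr (Ne.symm hk)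
    have : ∫ ω in (0:ℝ)..(2*π), f k ω
        = (a k : ℂ) * ∫ ω in (0:ℝ)..(2*π), Ce (((m-k:ℤ):ℝ) * ω) := by
      rw [hf]; exact intervalIntegral.integral_const_mul _ _
    rw [this]
    have := integral_Ce_int (m - k) hmk
    push_cast at this ⊢
    rw [this, mul_zero]
  have hintm : ∫ ω in Set.Ioc 0 (2*π), f m ω = (a m : ℂ) * (2*π) := by
    have : ∀ ω : ℝ, f m ω = (a m : ℂ) := by
      intro ω; rw [hf]; simp [Ce_zero]
    simp only [this]
    rw [MeasureTheory.setIntegral_const]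
    simp only [Real.volume_real_Ioc, sub_zero]
    rw [max_eq_left (by positivity)]
    rw [Complex.real_smul]
    push_cast
    ring
  have : (a m : ℂ) * (2*π) = 0 := by
    rw [← hintm]
    have h0 : ∫ ω in Set.Ioc 0 (2*π), (∑' k : ℤ, f k ω) ∂volume = 0 := by
      simp only [key, MeasureTheory.integral_zero]
    rw [← tsum_eq_single (L := SummationFilter.unconditional ℤ) m (fun k hk => hints k hk), ← hswap, h0]
  rcases mul_eq_zero.mp this with h1 | h1
  · exact_mod_cast h1
  · exfalso
    have : (2*π : ℝ) ≠ 0 := by positivity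
    exact this (by exact_mod_cast h1)

noncomputable section StmtAux

lemma term_eq_Ce (x : ℝ) : Complex.exp (-(x:ℂ) * Complex.I) = Ce (-x) := by
  rw [Ce]; push_cast; ring_nf

lemma summable_Ce (s : ℤ → ℝ) (hs : Summable fun k => |s k|) (φ : ℤ → ℝ) :
    Summable fun k : ℤ => (s k : ℂ) * Ce (φ k) := by
  apply Summable.of_norm
  have he : ∀ k : ℤ, ‖(s k : ℂ) * Ce (φ k)‖ = |s k| := by
    intro k; rw [norm_mul, Ce_norm, mul_one, Complex.norm_real, Real.norm_eq_abs]
  simp only [he]; exact hs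

lemma conj_tsum_Ce (s : ℤ → ℝ) (ω : ℝ) :
    (starRingEnd ℂ) (∑' k : ℤ, (s k : ℂ) * Ce (-((k:ℝ) * ω)))
      = ∑' k : ℤ, (s k : ℂ) * Ce ((k:ℝ) * ω) := by
  rw [show (starRingEnd ℂ) (∑' k : ℤ, (s k : ℂ) * Ce (-((k:ℝ) * ω)))
      = ∑' k : ℤ, (starRingEnd ℂ) ((s k : ℂ) * Ce (-((k:ℝ) * ω))) from
    Complex.conjCLE.map_tsum]
  congr 1; funext k
  rw [map_mul, Complex.conj_ofReal, Ce_conj, neg_neg]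

end StmtAux

/-- Low-pass part of Proposition 4: the dual low-pass filter inherits symmetry,
with center shifted by `(d + 1/2)(M − 1)`. -/
theorem stmt_8 (M : ℕ) (hM : 2 ≤ M) (d k₀ : ℤ) (h g : ℤ → ℝ)
    (hhs : Summable fun k : ℤ => |h k|) (hgs : Summable fun k : ℤ => |g k|)
    (θ₀ : ℝ → ℝ)
    (hθ : ∀ ω : ℝ, ∃ n : ℤ,
      2 * θ₀ ω = (2 * (d : ℝ) + 1) * ((M : ℝ) - 1) * ω + 2 * π * n)
    (hGH : ∀ ω : ℝ,
      (∑' k : ℤ, (g k : ℂ) * Complex.exp (-(((k : ℝ) * ω : ℝ) : ℂ) * Complex.I))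
        = Complex.exp (-(θ₀ ω : ℂ) * Complex.I) *
          ∑' k : ℤ, (h k : ℂ) * Complex.exp (-(((k : ℝ) * ω : ℝ) : ℂ) * Complex.I))
    (hsym : ∀ k : ℤ, h (2 * k₀ - k) = h k) :
    ∀ k : ℤ, g (2 * k₀ + (2 * d + 1) * ((M : ℤ) - 1) - k) = g k := by
  set c : ℤ := 2 * k₀ + (2 * d + 1) * ((M : ℤ) - 1) with hc
  -- rewrite hypothesis in terms of Ce
  set G : ℝ → ℂ := fun ω => ∑' k : ℤ, (g k : ℂ) * Ce (-((k:ℝ) * ω)) with hGdef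
  set H : ℝ → ℂ := fun ω => ∑' k : ℤ, (h k : ℂ) * Ce (-((k:ℝ) * ω)) with hHdef
  have hGH' : ∀ ω : ℝ, G ω = Ce (-(θ₀ ω)) * H ω := by
    intro ω
    have := hGH ω
    rw [hGdef, hHdef]
    simpa only [term_eq_Ce] using this
  -- Step A: conj H = Ce(2 k₀ ω) * H
  have stepA : ∀ ω : ℝ, (starRingEnd ℂ) (H ω) = Ce (2 * (k₀:ℝ) * ω) * H ω := by
    intro ω
    rw [hHdef]
    rw [conj_tsum_Ce h ω]
    have reidx : ∑' k : ℤ, (h k : ℂ) * Ce ((k:ℝ) * ω)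
        = ∑' k : ℤ, (h (2*k₀ - k) : ℂ) * Ce (((2*k₀ - k : ℤ):ℝ) * ω) := by
      exact ((Equiv.subLeft (2*k₀)).tsum_eq
        (fun j : ℤ => (h j : ℂ) * Ce ((j:ℝ) * ω))).symm
    rw [reidx]
    have termeq : ∀ k : ℤ, (h (2*k₀ - k) : ℂ) * Ce (((2*k₀ - k : ℤ):ℝ) * ω)
        = Ce (2 * (k₀:ℝ) * ω) * ((h k : ℂ) * Ce (-((k:ℝ) * ω))) := by
      intro k
      rw [hsym k]
      have : ((2*k₀ - k : ℤ):ℝ) * ω = 2 * (k₀:ℝ) * ω + (-((k:ℝ) * ω)) := by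
        push_cast; ring
      rw [this, Ce_add]; ring
    simp only [termeq]
    exact tsum_mul_left
  -- Step B: conj G = Ce(c ω) * G
  have stepB : ∀ ω : ℝ, (starRingEnd ℂ) (G ω) = Ce ((c:ℝ) * ω) * G ω := by
    intro ω
    obtain ⟨n, hn⟩ := hθ ω
    have hHG : H ω = Ce (θ₀ ω) * G ω := by
      rw [hGH' ω, ← mul_assoc, show Ce (θ₀ ω) * Ce (-(θ₀ ω)) = 1 from Ce_mul_Ce_neg _,
        one_mul]
    calc (starRingEnd ℂ) (G ω)
        = (starRingEnd ℂ) (Ce (-(θ₀ ω))) * (starRingEnd ℂ) (H ω) := by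
          rw [hGH' ω, map_mul]
      _ = Ce (θ₀ ω) * (Ce (2 * (k₀:ℝ) * ω) * H ω) := by
          rw [Ce_conj, neg_neg, stepA ω]
      _ = Ce (θ₀ ω) * (Ce (2 * (k₀:ℝ) * ω) * (Ce (θ₀ ω) * G ω)) := by rw [hHG]
      _ = (Ce (θ₀ ω) * Ce (2 * (k₀:ℝ) * ω) * Ce (θ₀ ω)) * G ω := by ring
      _ = Ce (θ₀ ω + 2 * (k₀:ℝ) * ω + θ₀ ω) * G ω := by
          rw [Ce_add, Ce_add]
      _ = Ce ((c:ℝ) * ω + 2 * π * n) * G ω := by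
          congr 2
          have : θ₀ ω + 2 * (k₀:ℝ) * ω + θ₀ ω = 2 * θ₀ ω + 2 * (k₀:ℝ) * ω := by ring
          rw [this, hn, hc]
          push_cast
          ring
      _ = Ce ((c:ℝ) * ω) * G ω := by rw [Ce_add, Ce_int_two_pi]; ring
  -- Step C: coefficients of the difference vanish
  have hgs' : Summable fun k : ℤ => |g (c - k)| :=
    ((Equiv.subLeft c).summable_iff (f := fun j : ℤ => |g j|)).mpr hgs
  have hasum : Summable fun k : ℤ => |g (c - k) - g k| := by
    apply Summable.of_nonneg_of_le (fun k => abs_nonneg _)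
      (fun k => abs_sub _ _) (hgs'.add hgs)
  have hzero : ∀ m : ℤ, g (c - m) - g m = 0 := by
    apply coeffs_zero _ hasum
    intro ω
    have hsum1 : Summable fun k : ℤ => (g (c - k) : ℂ) * Ce (-((k:ℝ) * ω)) :=
      summable_Ce (fun k => g (c - k)) hgs' _
    have hsum2 : Summable fun k : ℤ => (g k : ℂ) * Ce (-((k:ℝ) * ω)) :=
      summable_Ce g hgs _
    have split : ∀ k : ℤ, ((g (c - k) - g k : ℝ) : ℂ) * Ce (-((k:ℝ) * ω))
        = (g (c - k) : ℂ) * Ce (-((k:ℝ) * ω)) - (g k : ℂ) * Ce (-((k:ℝ) * ω)) := by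
      intro k; push_cast; ring
    rw [tsum_congr split, hsum1.tsum_sub hsum2]
    -- first sum equals G ω
    have first : (∑' k : ℤ, (g (c - k) : ℂ) * Ce (-((k:ℝ) * ω))) = G ω := by
      have reidx : (∑' k : ℤ, (g (c - k) : ℂ) * Ce (-((k:ℝ) * ω)))
          = ∑' k : ℤ, (g (c - (c - k)) : ℂ) * Ce (-(((c - k : ℤ):ℝ) * ω)) := by
        exact ((Equiv.subLeft c).tsum_eq
          (fun j : ℤ => (g (c - j) : ℂ) * Ce (-((j:ℝ) * ω)))).symm
      rw [reidx]
      have termeq : ∀ k : ℤ, (g (c - (c - k)) : ℂ) * Ce (-(((c - k : ℤ):ℝ) * ω))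
          = Ce (-((c:ℝ) * ω)) * ((g k : ℂ) * Ce ((k:ℝ) * ω)) := by
        intro k
        rw [sub_sub_cancel]
        have : -(((c - k : ℤ):ℝ) * ω) = -((c:ℝ) * ω) + (k:ℝ) * ω := by
          push_cast; ring
        rw [this, Ce_add]; ring
      simp only [termeq]
      rw [tsum_mul_left, ← conj_tsum_Ce g ω]
      have : (starRingEnd ℂ) (∑' k : ℤ, (g k : ℂ) * Ce (-((k:ℝ) * ω)))
          = Ce ((c:ℝ) * ω) * G ω := stepB ω
      rw [this, ← mul_assoc, show Ce (-((c:ℝ)*ω)) * Ce ((c:ℝ)*ω) = 1 by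
        rw [← Ce_add]; simp [Ce_zero], one_mul]
    rw [first, sub_self]
  intro k
  have := hzero k
  linarith
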